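/- arXiv:1902.00306 — 7 statements merged into one kernel-verified Lean document; each statement's English description precedes it below -/
import Mathlib

section
/- Let k ≥ 5 and let G be a graph on at least k+1 vertices with m(G) < (k+1)/2 in which every vertex and edge lies in a copy of K_k. Let v be a minimum-degree vertex, R(v) as defined, and G_v the graph obtained from the induced subgraph of G on V(G) \ V(R(v)) by deleting all edges not contained in any k-clique. If G_v has at most k vertices, then G_v is a complete graph K_k. -/
/-- Let `k ≥ 5` and let `G` be a graph on at least `k+1` vertices with
`m(G) < (k+1)/2` in which every vertex and edge lies in a `k`-clique.
Let `v` be a minimum-degree vertex, `R(v)` as defined, and `G_v` the graph on the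
vertex set `V(G) \ V(R(v))` whose edges are those edges of `G` lying inside a
`k`-clique contained in `V(G) \ V(R(v))`.  If `G_v` has at most `k` vertices,
then `G_v` is a complete graph `K_k`. -/
theorem Gv_is_complete_of_card_le {V : Type*} [Fintype V] [DecidableEq V]
    (k : ℕ) (hk : 5 ≤ k) (G : SimpleGraph V) [DecidableRel G.Adj]
    (hcard : k + 1 ≤ Fintype.card V)
    (hm : ∀ J : G.Subgraph, J.verts.Nonempty →
      (J.edgeSet.ncard : ℝ) / (J.verts.ncard : ℝ) < ((k : ℝ) + 1) / 2)
    (hvtx : ∀ x : V, ∃ s : Finset V, G.IsNClique k s ∧ x ∈ s)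
    (hedge : ∀ x y : V, G.Adj x y → ∃ s : Finset V, G.IsNClique k s ∧ x ∈ s ∧ y ∈ s)
    (v : V) (hmin : ∀ u : V, G.degree v ≤ G.degree u)
    (A : Set V)
    (hA : A = (({v} ∪ {w : V | G.Adj v w ∧
        ∀ s : Finset V, G.IsNClique k s → w ∈ s → v ∈ s}) : Set V)ᶜ)
    (hAcard : A.ncard ≤ k) :
    A.ncard = k ∧ ∀ x ∈ A, ∀ y ∈ A, x ≠ y →
      (G.Adj x y ∧ ∃ s : Finset V, G.IsNClique k s ∧ ↑s ⊆ A ∧ x ∈ s ∧ y ∈ s) := by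
  classical
  set n := Fintype.card V with hn
  have hnpos : 0 < n := by omega
  -- Step 1: degree of v is at most k
  have hdegv : G.degree v ≤ k := by
    by_contra hlt
    push_neg at hlt
    have htop := hm ⊤ ⟨v, trivial⟩
    have hverts : (⊤ : G.Subgraph).verts.ncard = n := by
      simp [Set.ncard_univ, hn]
    have hedges : (⊤ : G.Subgraph).edgeSet.ncard = G.edgeFinset.card := by
      rw [SimpleGraph.Subgraph.edgeSet_top]
      rw [Set.ncard_eq_toFinset_card']
      congr 1
    rw [hverts, hedges] at htop
    have h2e : G.edgeFinset.card * 2 < (k + 1) * n := by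
      have h := (div_lt_div_iff₀ (by exact_mod_cast hnpos) (by norm_num : (0:ℝ) < 2)).mp htop
      have h' : ((G.edgeFinset.card * 2 : ℕ) : ℝ) < (((k + 1) * n : ℕ) : ℝ) := by
        push_cast; linarith
      exact_mod_cast h'
    have hsum : n * (k + 1) ≤ ∑ u : V, G.degree u := by
      calc n * (k + 1) = ∑ _u : V, (k + 1) := by simp [mul_comm, hn]
        _ ≤ ∑ u : V, G.degree u :=
          Finset.sum_le_sum (fun u _ => le_trans (by omega) (hmin u))
    rw [SimpleGraph.sum_degrees_eq_twice_card_edges] at hsum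
    rw [mul_comm, two_mul] at hsum
    rw [mul_comm] at h2e
    omega
  -- Step 2: there is a k-clique avoiding v
  obtain ⟨s, hs, hvs⟩ : ∃ s : Finset V, G.IsNClique k s ∧ v ∉ s := by
    by_contra h
    push_neg at h
    have hadjv : ∀ x : V, x ≠ v → G.Adj v x := by
      intro x hx
      obtain ⟨s, hs, hxs⟩ := hvtx x
      exact hs.1 (h s hs) (by exact_mod_cast hxs) (Ne.symm hx)
    -- all vertices are neighbors of v, so n ≤ deg v + 1 ≤ k + 1 ≤ n
    have hsub : (Finset.univ : Finset V) ⊆ insert v (G.neighborFinset v) := by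
      intro x _
      by_cases hx : x = v
      · simp [hx]
      · simp [SimpleGraph.mem_neighborFinset, hadjv x hx]
    have hle : n ≤ G.degree v + 1 := by
      have h1 := Finset.card_le_card hsub
      rw [Finset.card_univ] at h1
      calc n ≤ (insert v (G.neighborFinset v)).card := h1
        _ ≤ (G.neighborFinset v).card + 1 := Finset.card_insert_le _ _
        _ = G.degree v + 1 := by rw [G.card_neighborFinset_eq_degree]
    have hnk : n = k + 1 := by omega
    have hdeg : G.degree v = k := by omega
    -- every vertex has degree ≥ k = n - 1, so G is complete
    have halladj : ∀ x y : V, x ≠ y → G.Adj x y := by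
      intro x y hxy
      by_contra hna
      have hNsub : G.neighborFinset x ⊆ (Finset.univ.erase x).erase y := by
        intro z hz
        rw [SimpleGraph.mem_neighborFinset] at hz
        refine Finset.mem_erase.mpr ⟨?_, Finset.mem_erase.mpr ⟨?_, Finset.mem_univ z⟩⟩
        · rintro rfl
          exact hna hz
        · rintro rfl
          exact G.irrefl hz
      have hcard2 : ((Finset.univ.erase x).erase y).card ≤ n - 2 := by
        have h1 : (Finset.univ.erase x).card = n - 1 := by
          rw [Finset.card_erase_of_mem (Finset.mem_univ x), Finset.card_univ]
        have h2 : ((Finset.univ.erase x).erase y).card = (Finset.univ.erase x).card - 1 :=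
          Finset.card_erase_of_mem (Finset.mem_erase.mpr ⟨hxy.symm, Finset.mem_univ y⟩)
        omega
      have hdx : G.degree x ≤ n - 2 := by
        rw [← SimpleGraph.card_neighborFinset_eq_degree]
        exact le_trans (Finset.card_le_card hNsub) hcard2
      have hmx := hmin x
      omega
    -- then univ.erase v is a k-clique not containing v
    have hclq : G.IsNClique k (Finset.univ.erase v) := by
      constructor
      · intro x hx y hy hxy
        exact halladj x y hxy
      · rw [Finset.card_erase_of_mem (Finset.mem_univ v), Finset.card_univ]
        omega
    exact (Finset.notMem_erase v Finset.univ) (h _ hclq)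
  -- Step 3: the clique s lies inside A
  have hsubA : (↑s : Set V) ⊆ A := by
    intro x hxs
    rw [hA]
    intro hxR
    rcases hxR with hxv | hxw
    · rw [Set.mem_singleton_iff] at hxv
      exact hvs (hxv ▸ hxs)
    · exact hvs (hxw.2 s hs hxs)
  have hAk : A.ncard = k := by
    have := Set.ncard_le_ncard hsubA (Set.toFinite A)
    rw [Set.ncard_coe_finset, hs.2] at this
    omega
  have hAeq : (↑s : Set V) = A := by
    apply Set.eq_of_subset_of_ncard_le hsubA
    rw [Set.ncard_coe_finset, hs.2, hAk]
  refine ⟨hAk, fun x hx y hy hxy => ?_⟩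
  rw [← hAeq] at hx hy
  exact ⟨hs.1 hx hy hxy, s, hs, hsubA, hx, hy⟩
end

section
/- Let k ≥ 5 and let G be a graph with m(G) < (k+1)/2 in which every vertex and edge lies in a k-clique. If v is a vertex of minimum degree, then the subgraph K(v) induced on {v} ∪ N(v) is isomorphic to K_k, to K_{k+1} minus one edge, or to K_{k+1}. -/
open SimpleGraph

/-- If `S` induces a complete graph on `n` vertices, `G.induce S ≅ K_n`. -/
lemma aux_iso_top {V : Type*} (G : SimpleGraph V) (S : Set V) (n : ℕ)
    (hfin : S.Finite) (hcard : S.ncard = n)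
    (hadj : ∀ ⦃a b : V⦄, a ∈ S → b ∈ S → a ≠ b → G.Adj a b) :
    Nonempty ((G.induce S) ≃g (⊤ : SimpleGraph (Fin n))) := by
  haveI := hfin.fintype
  have hc : Fintype.card S = n := by
    rw [← hcard, Set.ncard_eq_toFinset_card', Set.toFinset_card]
  refine ⟨⟨Fintype.equivFinOfCardEq hc, ?_⟩⟩
  intro a b
  simp only [top_adj, EmbeddingLike.apply_eq_iff_eq, comap_adj, Function.Embedding.coe_subtype]
  constructor
  · intro h
    exact hadj a.2 b.2 (fun hab => h (by rw [Subtype.ext hab]))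
  · intro h hab
    have hab' : a = b := (Fintype.equivFinOfCardEq hc).injective hab
    exact G.irrefl (hab' ▸ h)

/-- If `S` induces a complete graph minus exactly one edge `xy`,
then `G.induce S ≅ K_{m+1}` minus an edge. -/
lemma aux_iso_del {V : Type*} (G : SimpleGraph V) (S : Set V) (m : ℕ) (hm : 1 ≤ m)
    (hfin : S.Finite) (hcard : S.ncard = m + 1)
    (x y : V) (hx : x ∈ S) (hy : y ∈ S) (hxy : x ≠ y) (hnadj : ¬ G.Adj x y)
    (hadj : ∀ ⦃a b : V⦄, a ∈ S → b ∈ S → a ≠ b →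
      ¬(a = x ∧ b = y) → ¬(a = y ∧ b = x) → G.Adj a b) :
    Nonempty ((G.induce S) ≃g
      ((⊤ : SimpleGraph (Fin (m + 1))).deleteEdges {s(0, 1)})) := by
  haveI := hfin.fintype
  have hc : Fintype.card S = m + 1 := by
    rw [← hcard, Set.ncard_eq_toFinset_card', Set.toFinset_card]
  set X : ↥S := ⟨x, hx⟩ with hX
  set Y : ↥S := ⟨y, hy⟩ with hY
  have hXY : X ≠ Y := fun h => hxy (congrArg Subtype.val h)
  have h01 : (0 : Fin (m + 1)) ≠ 1 := by
    intro h
    have := congrArg Fin.val h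
    rw [Fin.val_zero, Fin.val_one', Nat.mod_eq_of_lt (show 1 < m + 1 by omega)] at this
    omega
  set e₁ : ↥S ≃ Fin (m + 1) :=
    (Fintype.equivFinOfCardEq hc).trans
      (Equiv.swap ((Fintype.equivFinOfCardEq hc) X) 0) with he₁
  have he₁X : e₁ X = 0 := by
    simp [he₁, Equiv.swap_apply_left]
  have he₁Y : e₁ Y ≠ 0 := by
    rw [← he₁X]
    exact fun h => hXY (e₁.injective h).symm
  set e : ↥S ≃ Fin (m + 1) := e₁.trans (Equiv.swap (e₁ Y) 1) with he
  have heY : e Y = 1 := by simp [he, Equiv.swap_apply_left]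
  have heX : e X = 0 := by
    rw [he]
    simp only [Equiv.trans_apply, he₁X]
    exact Equiv.swap_apply_of_ne_of_ne (Ne.symm he₁Y) h01
  refine ⟨⟨e, ?_⟩⟩
  intro a b
  simp only [deleteEdges_adj, top_adj, comap_adj, Function.Embedding.coe_subtype,
    Set.mem_singleton_iff, ne_eq]
  rw [← heX, ← heY, Sym2.eq_iff]
  simp only [Equiv.apply_eq_iff_eq]
  constructor
  · rintro ⟨h1, h2⟩
    exact hadj a.2 b.2 (fun h => h1 (Subtype.ext h))
      (fun h => h2 (Or.inl ⟨Subtype.ext h.1, Subtype.ext h.2⟩))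
      (fun h => h2 (Or.inr ⟨Subtype.ext h.1, Subtype.ext h.2⟩))
  · intro h
    refine ⟨fun hab => ?_, fun hor => ?_⟩
    · have hab' : (a : V) = b := congrArg Subtype.val hab
      rw [hab'] at h
      exact G.irrefl h
    · rcases hor with ⟨h1, h2⟩ | ⟨h1, h2⟩
      · subst h1; subst h2; exact hnadj h
      · subst h1; subst h2; exact hnadj h.symm

/-- Let `k ≥ 5` and let `G` be a graph with `m(G) < (k+1)/2` in which every
vertex and edge lies in a `k`-clique.  If `v` is a vertex of minimum degree,
then the subgraph `K(v)` induced on `{v} ∪ N(v)` is isomorphic to `K_k`,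
to `K_{k+1}` minus one edge, or to `K_{k+1}`. -/
theorem Kv_trichotomy {V : Type*} [Fintype V]
    (k : ℕ) (hk : 5 ≤ k) (G : SimpleGraph V) [DecidableRel G.Adj]
    (hm : ∀ J : G.Subgraph, J.verts.Nonempty →
      (J.edgeSet.ncard : ℝ) / (J.verts.ncard : ℝ) < ((k : ℝ) + 1) / 2)
    (hvtx : ∀ x : V, ∃ s : Finset V, G.IsNClique k s ∧ x ∈ s)
    (hedge : ∀ x y : V, G.Adj x y → ∃ s : Finset V, G.IsNClique k s ∧ x ∈ s ∧ y ∈ s)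
    (v : V) (hmin : ∀ u : V, G.degree v ≤ G.degree u) :
    Nonempty ((G.induce ({v} ∪ G.neighborSet v)) ≃g (⊤ : SimpleGraph (Fin k))) ∨
    Nonempty ((G.induce ({v} ∪ G.neighborSet v)) ≃g
      ((⊤ : SimpleGraph (Fin (k + 1))).deleteEdges {s(0, 1)})) ∨
    Nonempty ((G.induce ({v} ∪ G.neighborSet v)) ≃g (⊤ : SimpleGraph (Fin (k + 1)))) := by
  classical
  set S : Set V := {v} ∪ G.neighborSet v with hS
  have hSfin : S.Finite := Set.toFinite S
  have hvS : v ∈ S := Or.inl rfl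
  have hmemN : ∀ {u : V}, u ∈ S → u ≠ v → G.Adj v u := by
    intro u hu hne
    rcases hu with h | h
    · exact absurd (Set.mem_singleton_iff.mp h) hne
    · exact h
  have hvadj : ∀ {u : V}, G.Adj v u → u ∈ S := fun h => Or.inr h
  have hScard : S.ncard = G.degree v + 1 := by
    rw [hS, Set.singleton_union,
      Set.ncard_insert_of_notMem (show v ∉ G.neighborSet v from fun h => G.irrefl h)
        (Set.toFinite _)]
    congr 1
    rw [← Nat.card_coe_set_eq, Nat.card_eq_fintype_card, G.card_neighborSet_eq_degree]
  have hclique_sub : ∀ {s : Finset V}, G.IsNClique k s → v ∈ s → ↑s ⊆ S := by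
    intro s hs hv u hu
    by_cases h : u = v
    · subst h; exact hvS
    · exact hvadj (hs.1 (Finset.mem_coe.mpr hv) hu (fun hh => h hh.symm))
  -- degree lower bound
  have hdeg_lb : k - 1 ≤ G.degree v := by
    obtain ⟨s, hs, hvs⟩ := hvtx v
    have hsub : s.erase v ⊆ G.neighborFinset v := by
      intro u hu
      rw [SimpleGraph.mem_neighborFinset]
      exact hs.1 (Finset.mem_coe.mpr hvs)
        (Finset.mem_coe.mpr (Finset.mem_of_mem_erase hu))
        (fun h => (Finset.ne_of_mem_erase hu) h.symm)
    have hle := Finset.card_le_card hsub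
    rwa [Finset.card_erase_of_mem hvs, hs.2, G.card_neighborFinset_eq_degree] at hle
  -- degree upper bound
  have hdeg_ub : G.degree v ≤ k := by
    have hne : (⊤ : G.Subgraph).verts.Nonempty := ⟨v, by simp⟩
    have h1 := hm ⊤ hne
    have hE : ((⊤ : G.Subgraph).edgeSet).ncard = G.edgeFinset.card := by
      rw [Subgraph.edgeSet_top, Set.ncard_eq_toFinset_card']
      rw [Set.toFinset_card, SimpleGraph.edgeFinset_card]
    have hV : ((⊤ : G.Subgraph).verts).ncard = Fintype.card V := by
      rw [Subgraph.verts_top, Set.ncard_univ, Nat.card_eq_fintype_card]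
    rw [hE, hV] at h1
    have hVpos : 0 < Fintype.card V := Fintype.card_pos_iff.mpr ⟨v⟩
    have h2 : (G.edgeFinset.card : ℝ) * 2 < ((k : ℝ) + 1) * (Fintype.card V) := by
      rw [div_lt_div_iff₀ (by exact_mod_cast hVpos) (by norm_num)] at h1
      exact h1
    have h3 : 2 * G.edgeFinset.card < (k + 1) * Fintype.card V := by
      have h2' : ((2 * G.edgeFinset.card : ℕ) : ℝ) < (((k + 1) * Fintype.card V : ℕ) : ℝ) := by
        push_cast
        linarith
      exact_mod_cast h2'
    have h4 : Fintype.card V * G.degree v ≤ 2 * G.edgeFinset.card := by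
      have hsum : ∑ u, G.degree u = 2 * G.edgeFinset.card :=
        G.sum_degrees_eq_twice_card_edges
      rw [← hsum]
      calc Fintype.card V * G.degree v = (Finset.univ : Finset V).card * G.degree v := by
            rw [Finset.card_univ]
        _ ≤ ∑ u, G.degree u := by
            rw [← smul_eq_mul]
            exact Finset.card_nsmul_le_sum Finset.univ _ _ (fun u _ => hmin u)
    have h5 : Fintype.card V * G.degree v < Fintype.card V * (k + 1) := by
      calc Fintype.card V * G.degree v ≤ 2 * G.edgeFinset.card := h4
        _ < (k + 1) * Fintype.card V := h3
        _ = Fintype.card V * (k + 1) := Nat.mul_comm _ _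
    have := Nat.lt_of_mul_lt_mul_left h5
    omega
  have hdeg : G.degree v = k - 1 ∨ G.degree v = k := by omega
  rcases hdeg with hdeg | hdeg
  · -- degree k - 1 : K(v) = K_k
    left
    obtain ⟨s, hs, hvs⟩ := hvtx v
    have hsub : (↑s : Set V) ⊆ S := hclique_sub hs hvs
    have hcards : (↑s : Set V).ncard = k := by rw [Set.ncard_coe_finset, hs.2]
    have hScard' : S.ncard = k := by rw [hScard, hdeg]; omega
    have hSeq : (↑s : Set V) = S :=
      Set.eq_of_subset_of_ncard_le hsub (by rw [hcards, hScard']) hSfin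
    refine aux_iso_top G S k hSfin hScard' ?_
    intro a b ha hb hab
    rw [← hSeq] at ha hb
    exact hs.1 ha hb hab
  · -- degree k
    have hScard' : S.ncard = k + 1 := by rw [hScard, hdeg]
    -- a vertex cannot have two non-neighbours in S
    have htwo : ∀ {z a b : V}, z ∈ S → a ∈ S → b ∈ S → a ≠ b → a ≠ z → b ≠ z →
        ¬ G.Adj z a → ¬ G.Adj z b → False := by
      intro z a b hzS haS hbS hab haz hbz hna hnb
      have hzv : z ≠ v := by
        intro h; subst h; exact hna (hmemN haS haz)
      obtain ⟨t, ht, hvt, hzt⟩ := hedge v z (hmemN hzS hzv)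
      have htS : (↑t : Set V) ⊆ S := hclique_sub ht hvt
      have hat : a ∉ (↑t : Set V) := fun h =>
        hna (ht.1 (Finset.mem_coe.mpr hzt) h (Ne.symm haz))
      have hbt : b ∉ (↑t : Set V) := fun h =>
        hnb (ht.1 (Finset.mem_coe.mpr hzt) h (Ne.symm hbz))
      have hbig : insert a (insert b (↑t : Set V)) ⊆ S := by
        intro u hu
        rcases hu with h | h | h
        · exact h ▸ haS
        · exact h ▸ hbS
        · exact htS h
      have hcardbig : (insert a (insert b (↑t : Set V))).ncard = k + 2 := by
        rw [Set.ncard_insert_of_notMem (by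
            intro h
            rcases h with h | h
            · exact hab h
            · exact hat h) (Set.Finite.insert _ (Set.toFinite _)),
          Set.ncard_insert_of_notMem hbt (Set.toFinite _),
          Set.ncard_coe_finset, ht.2]
      have := Set.ncard_le_ncard hbig hSfin
      rw [hcardbig, hScard'] at this
      omega
    -- uniqueness of the non-edge
    have huniq : ∀ {a b x y : V}, a ∈ S → b ∈ S → x ∈ S → y ∈ S → a ≠ b → x ≠ y →
        ¬ G.Adj a b → ¬ G.Adj x y → (a = x ∧ b = y) ∨ (a = y ∧ b = x) := by
      intro a b x y haS hbS hxS hyS hab hxy hnab hnxy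
      have hav : a ≠ v := by
        intro h; subst h; exact hnab (hmemN hbS (Ne.symm hab))
      obtain ⟨s, hs, hvs, has⟩ := hedge v a (hmemN haS hav)
      have hsS : (↑s : Set V) ⊆ S := hclique_sub hs hvs
      have hbs : b ∉ (↑s : Set V) := fun h =>
        hnab (hs.1 (Finset.mem_coe.mpr has) h hab)
      have hcover : ∀ {z : V}, z ∈ S → z ≠ b → z ∈ (↑s : Set V) := by
        have heq : insert b (↑s : Set V) = S := by
          refine Set.eq_of_subset_of_ncard_le ?_ ?_ hSfin
          · intro u hu
            rcases hu with h | h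
            · exact h ▸ hbS
            · exact hsS h
          · rw [hScard', Set.ncard_insert_of_notMem hbs (Set.toFinite _),
              Set.ncard_coe_finset, hs.2]
        intro z hzS hzb
        rw [← heq] at hzS
        rcases hzS with h | h
        · exact absurd h hzb
        · exact h
      by_cases hxb : x = b
      · subst hxb
        by_cases hya : y = a
        · subst hya
          exact Or.inr ⟨rfl, rfl⟩
        · exact absurd (htwo hxS haS hyS (fun h => hya h.symm) hab
            (Ne.symm hxy) (fun h => hnab h.symm) hnxy) not_false
      · by_cases hyb : y = b
        · subst hyb
          by_cases hxa : x = a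
          · subst hxa
            exact Or.inl ⟨rfl, rfl⟩
          · exact absurd (htwo hyS haS hxS (fun h => hxa h.symm) hab
              hxy (fun h => hnab h.symm) (fun h => hnxy h.symm)) not_false
        · have hxs := hcover hxS hxb
          have hys := hcover hyS hyb
          exact absurd (hs.1 hxs hys hxy) hnxy
    by_cases hex : ∃ x y : V, x ∈ S ∧ y ∈ S ∧ x ≠ y ∧ ¬ G.Adj x y
    · right; left
      obtain ⟨x, y, hxS, hyS, hxy, hnxy⟩ := hex
      refine aux_iso_del G S k (by omega) hSfin hScard' x y hxS hyS hxy hnxy ?_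
      intro a b haS hbS hab h1 h2
      by_contra hnab
      rcases huniq haS hbS hxS hyS hab hxy hnab hnxy with h | h
      · exact h1 h
      · exact h2 h
    · right; right
      push_neg at hex
      refine aux_iso_top G S (k + 1) hSfin hScard' ?_
      intro a b ha hb hab
      exact hex a b ha hb hab
end

section
/- Let k ≥ 5 and let G be a connected graph on at least k+1 vertices with m(G) < (k+1)/2 whose vertices and edges all lie in a single K_k-component. Let v be a minimum-degree vertex with K(v) = K_k (induced on {v} ∪ N(v)), and suppose R(v) has ℓ vertices. Then 1 ≤ ℓ ≤ k−2, R(v) is a complete graph K_ℓ, and S(v) (induced on V(K(v)) \ V(R(v))) is a complete graph K_{k−ℓ}. -/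
/-- Configuration `X_ℓ`: let `k ≥ 5` and let `G` be a connected graph on at least
`k+1` vertices with `m(G) < (k+1)/2` whose vertices and edges all lie in a single
`K_k`-component.  If `v` is a minimum-degree vertex with `K(v) = K_k`
(the induced subgraph on `{v} ∪ N(v)` is a complete graph on `k` vertices),
and `R(v)` has `ℓ` vertices, then `1 ≤ ℓ ≤ k-2`, `R(v)` is a complete graph
`K_ℓ`, and `S(v) = K(v) \ R(v)` is a complete graph `K_{k-ℓ}`. -/
theorem config_X {V : Type*} [Fintype V] [DecidableEq V]
    (k : ℕ) (hk : 5 ≤ k) (G : SimpleGraph V) [DecidableRel G.Adj]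
    (hconn : G.Connected)
    (hcard : k + 1 ≤ Fintype.card V)
    (hm : ∀ J : G.Subgraph, J.verts.Nonempty →
      (J.edgeSet.ncard : ℝ) / (J.verts.ncard : ℝ) < ((k : ℝ) + 1) / 2)
    (hvtx : ∀ x : V, ∃ s : Finset V, G.IsNClique k s ∧ x ∈ s)
    (hedge : ∀ x y : V, G.Adj x y → ∃ s : Finset V, G.IsNClique k s ∧ x ∈ s ∧ y ∈ s)
    (hcomp : ∀ s t : Finset V, G.IsNClique k s → G.IsNClique k t →
      Relation.ReflTransGen
        (fun a b : Finset V => G.IsNClique k a ∧ G.IsNClique k b ∧ 2 ≤ (a ∩ b).card) s t)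
    (v : V) (hmin : ∀ u : V, G.degree v ≤ G.degree u)
    (Kv Rv : Set V)
    (hKv : Kv = {v} ∪ G.neighborSet v)
    (hRv : Rv = {v} ∪ {w : V | G.Adj v w ∧
        ∀ s : Finset V, G.IsNClique k s → w ∈ s → v ∈ s})
    (hKvk : Kv.ncard = k ∧ ∀ x ∈ Kv, ∀ y ∈ Kv, x ≠ y → G.Adj x y) :
    (1 ≤ Rv.ncard ∧ Rv.ncard ≤ k - 2) ∧
    (∀ x ∈ Rv, ∀ y ∈ Rv, x ≠ y → G.Adj x y) ∧
    ((Kv \ Rv).ncard = k - Rv.ncard ∧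
      ∀ x ∈ Kv \ Rv, ∀ y ∈ Kv \ Rv, x ≠ y → G.Adj x y) := by

  obtain ⟨hKcard, hKcomplete⟩ := hKvk
  have hfinK : Kv.Finite := Set.toFinite _
  have hRsub : Rv ⊆ Kv := by
    rw [hRv, hKv]
    intro x hx
    rcases hx with hx | hx
    · exact Or.inl hx
    · exact Or.inr hx.1
  have hvR : v ∈ Rv := by rw [hRv]; exact Or.inl rfl
  have hvK : v ∈ Kv := hRsub hvR
  -- Claim A: the only k-clique containing v is Kv
  have claimA : ∀ s : Finset V, G.IsNClique k s → v ∈ s → (↑s : Set V) = Kv := by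
    intro s hs hvs
    have hsub : (↑s : Set V) ⊆ Kv := by
      intro u hu
      rw [hKv]
      by_cases h : u = v
      · exact Or.inl (by simp [h])
      · exact Or.inr (hs.isClique (Finset.mem_coe.mpr hvs) hu (fun e => h e.symm))
    have h1 : (↑s : Set V).ncard = k := by rw [Set.ncard_coe_finset]; exact hs.card_eq
    exact Set.eq_of_subset_of_ncard_le hsub (by rw [h1, hKcard]) hfinK
  -- key: S(v) has at least 2 vertices
  have key : 2 ≤ (Kv \ Rv).ncard := by
    by_contra hcon
    push_neg at hcon
    set F : Finset V := hfinK.toFinset with hF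
    have hFcoe : (↑F : Set V) = Kv := hfinK.coe_toFinset
    have hFclique : G.IsNClique k F := by
      constructor
      · intro x hx y hy hxy
        exact hKcomplete x (by rwa [← hFcoe]) y (by rwa [← hFcoe]) hxy
      · rw [← Set.ncard_coe_finset, hFcoe, hKcard]
    have honly : ∀ s : Finset V,
        Relation.ReflTransGen
          (fun a b : Finset V => G.IsNClique k a ∧ G.IsNClique k b ∧ 2 ≤ (a ∩ b).card) F s →
        (↑s : Set V) = Kv := by
      intro s h
      induction h with
      | refl => exact hFcoe
      | tail _ hstep ih =>
        rename_i c b _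
        obtain ⟨hc, hb, hcard2⟩ := hstep
        by_cases hvb : v ∈ b
        · exact claimA _ hb hvb
        · exfalso
          have hsub2 : (↑(c ∩ b) : Set V) ⊆ Kv \ Rv := by
            intro u hu
            simp only [Finset.coe_inter, Set.mem_inter_iff, Finset.mem_coe] at hu
            obtain ⟨huc, hub⟩ := hu
            have huK : u ∈ Kv := ih ▸ (Finset.mem_coe.mpr huc)
            refine ⟨huK, fun huR => ?_⟩
            rw [hRv] at huR
            rcases huR with h | h
            · exact hvb (by rwa [show u = v from h] at hub)
            · exact hvb (h.2 b hb hub)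
          have hle : (c ∩ b).card ≤ 1 := by
            have h2 := Set.ncard_le_ncard hsub2 hfinK.diff
            rw [Set.ncard_coe_finset] at h2
            omega
          omega
    have hxout : ∃ x, x ∉ Kv := by
      by_contra h
      push_neg at h
      have huniv : Kv = Set.univ := Set.eq_univ_of_forall h
      rw [huniv, Set.ncard_univ, Nat.card_eq_fintype_card] at hKcard
      omega
    obtain ⟨x, hx⟩ := hxout
    obtain ⟨s, hs, hxs⟩ := hvtx x
    exact hx ((honly s (hcomp F s hFclique hs)) ▸ Finset.mem_coe.mpr hxs)
  have hdiff : (Kv \ Rv).ncard = Kv.ncard - Rv.ncard := Set.ncard_diff hRsub (hfinK.subset hRsub)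
  have hRle : Rv.ncard ≤ k := hKcard ▸ Set.ncard_le_ncard hRsub hfinK
  have hR1 : 1 ≤ Rv.ncard :=
    (Set.ncard_pos (hfinK.subset hRsub)).mpr ⟨v, hvR⟩
  refine ⟨⟨hR1, by omega⟩, ?_, ⟨by omega, ?_⟩⟩
  · exact fun x hx y hy hxy => hKcomplete x (hRsub hx) y (hRsub hy) hxy
  · exact fun x hx y hy hxy => hKcomplete x hx.1 y hy.1 hxy
end

section
/- Let k ≥ 5 and let G be a connected graph on at least k+1 vertices with m(G) < (k+1)/2 whose vertices and edges all lie in a single K_k-component. Let v be a minimum-degree vertex with K(v) = K_{k+1}^- (complete graph on k+1 vertices minus one edge) and suppose R(v) has ℓ vertices. Then R(v) is a complete graph K_ℓ and S(v) is a copy of K_{k−ℓ+1}^-; in particular the unique missing edge of K(v) has both endpoints in S(v). -/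
/-- Configuration `Y_ℓ`: let `k ≥ 5` and let `G` be a connected graph on at least
`k+1` vertices with `m(G) < (k+1)/2` whose vertices and edges all lie in a single
`K_k`-component.  Suppose `v` is a minimum-degree vertex with
`K(v) = K_{k+1}^-`, i.e. the induced subgraph on `{v} ∪ N(v)` has `k+1`
vertices and all pairs are adjacent except for the single pair `{x, y}`.
If `R(v)` has `ℓ` vertices, then `R(v)` is a complete graph `K_ℓ` and
`S(v) = K(v) \ R(v)` is a copy of `K_{k-ℓ+1}^-`; in particular the unique missing
edge of `K(v)` has both endpoints `x, y` in `S(v)`. -/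
theorem config_Y {V : Type*} [Fintype V] [DecidableEq V]
    (k : ℕ) (hk : 5 ≤ k) (G : SimpleGraph V) [DecidableRel G.Adj]
    (hconn : G.Connected)
    (hcard : k + 1 ≤ Fintype.card V)
    (hm : ∀ J : G.Subgraph, J.verts.Nonempty →
      (J.edgeSet.ncard : ℝ) / (J.verts.ncard : ℝ) < ((k : ℝ) + 1) / 2)
    (hvtx : ∀ x : V, ∃ s : Finset V, G.IsNClique k s ∧ x ∈ s)
    (hedge : ∀ x y : V, G.Adj x y → ∃ s : Finset V, G.IsNClique k s ∧ x ∈ s ∧ y ∈ s)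
    (hcomp : ∀ s t : Finset V, G.IsNClique k s → G.IsNClique k t →
      Relation.ReflTransGen
        (fun a b : Finset V => G.IsNClique k a ∧ G.IsNClique k b ∧ 2 ≤ (a ∩ b).card) s t)
    (v : V) (hmin : ∀ u : V, G.degree v ≤ G.degree u)
    (Kv Rv : Set V)
    (hKv : Kv = {v} ∪ G.neighborSet v)
    (hRv : Rv = {v} ∪ {w : V | G.Adj v w ∧
        ∀ s : Finset V, G.IsNClique k s → w ∈ s → v ∈ s})
    (hKvcard : Kv.ncard = k + 1)
    (x y : V) (hx : x ∈ Kv) (hy : y ∈ Kv) (hxy : x ≠ y) (hnadj : ¬ G.Adj x y)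
    (hrest : ∀ a ∈ Kv, ∀ b ∈ Kv, a ≠ b → ({a, b} : Set V) ≠ {x, y} → G.Adj a b) :
    (∀ a ∈ Rv, ∀ b ∈ Rv, a ≠ b → G.Adj a b) ∧
    (Kv \ Rv).ncard = k - Rv.ncard + 1 ∧
    (x ∈ Kv \ Rv ∧ y ∈ Kv \ Rv) ∧
    (∀ a ∈ Kv \ Rv, ∀ b ∈ Kv \ Rv, a ≠ b → ¬ G.Adj a b →
      (a = x ∧ b = y) ∨ (a = y ∧ b = x)) := by
  classical
  have hvK : v ∈ Kv := by rw [hKv]; exact Or.inl rfl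
  have hNv : G.neighborSet v = Kv \ {v} := by
    rw [hKv]
    ext w
    simp only [Set.mem_diff, Set.singleton_union, Set.mem_insert_iff,
      SimpleGraph.mem_neighborSet, Set.mem_singleton_iff]
    constructor
    · intro h; exact ⟨Or.inr h, (G.ne_of_adj h).symm⟩
    · rintro ⟨h | h, hne⟩
      · exact absurd h hne
      · exact h
  have hdegv : G.degree v = k := by
    have h1 : (G.neighborSet v).ncard = k := by
      rw [hNv, Set.ncard_diff_singleton_of_mem hvK, hKvcard]; omega
    rw [← h1, Set.ncard_eq_toFinset_card']
    rfl
  have hKmem : ∀ w ∈ Kv, w ≠ v → G.Adj v w := by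
    intro w hw hne
    rw [hKv] at hw
    rcases hw with hw | hw
    · exact absurd hw hne
    · exact hw
  -- key: any non-adjacent pair in Kv is disjoint from Rv
  have key : ∀ a b : V, a ≠ b → ¬ G.Adj a b → a ∈ Kv → b ∈ Kv → a ∉ Rv := by
    intro a b hab hnab haK hbK haR
    rw [hRv] at haR
    rcases haR with haR | ⟨hadj, hall⟩
    · -- a = v, but then v adjacent to b ∈ Kv
      simp only [Set.mem_singleton_iff] at haR
      subst haR
      exact hnab (hKmem b hbK (Ne.symm hab))
    · have hav : a ≠ v := fun h => by subst h; exact (G.irrefl hadj)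
      have hsub : G.neighborSet a ⊆ Kv \ {a, b} := by
        intro z hz
        have hz' : G.Adj a z := hz
        obtain ⟨s, hs, has, hzs⟩ := hedge a z hz'
        have hvs : v ∈ s := hall s hs has
        have hsK : (↑s : Set V) ⊆ Kv := by
          intro w hw
          by_cases hwv : w = v
          · subst hwv; exact hvK
          · rw [hKv]
            exact Or.inr (hs.1 hvs hw (Ne.symm hwv))
        have hzK : z ∈ Kv := hsK hzs
        have hza : z ≠ a := (G.ne_of_adj hz').symm
        have hzb : z ≠ b := by
          intro h; subst h
          exact hnab (hs.1 has hzs hab)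
        simp only [Set.mem_diff, Set.mem_insert_iff, Set.mem_singleton_iff]
        exact ⟨hzK, by tauto⟩
      have hcard2 : ({a, b} : Set V).ncard = 2 := Set.ncard_pair hab
      have hsubK : ({a, b} : Set V) ⊆ Kv := by
        intro w hw
        rcases hw with hw | hw
        · subst hw; exact haK
        · simp only [Set.mem_singleton_iff] at hw; subst hw; exact hbK
      have hdiff : (Kv \ ({a, b} : Set V)).ncard = k - 1 := by
        rw [Set.ncard_diff hsubK, hcard2, hKvcard]; omega
      have hdega : G.degree a ≤ k - 1 := by
        have h1 : (G.neighborSet a).ncard ≤ (Kv \ ({a, b} : Set V)).ncard :=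
          Set.ncard_le_ncard hsub (Set.toFinite _)
        have h2 : G.degree a = (G.neighborSet a).ncard := by
          rw [Set.ncard_eq_toFinset_card']; rfl
        omega
      have := hmin a
      omega
  have hxR : x ∉ Rv := key x y hxy hnadj hx hy
  have hyR : y ∉ Rv := key y x (Ne.symm hxy) (fun h => hnadj h.symm) hy hx
  have hRsubK : Rv ⊆ Kv := by
    intro w hw
    rw [hRv] at hw
    rcases hw with hw | ⟨hadj, _⟩
    · simp only [Set.mem_singleton_iff] at hw; subst hw; exact hvK
    · rw [hKv]; exact Or.inr hadj
  have hRcard : Rv.ncard ≤ k := by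
    have hsub : Rv ⊆ Kv \ {x} := fun w hw =>
      ⟨hRsubK hw, fun h => hxR (h ▸ hw)⟩
    have h1 : (Kv \ {x}).ncard = k := by
      rw [Set.ncard_diff_singleton_of_mem hx, hKvcard]; omega
    calc Rv.ncard ≤ (Kv \ {x}).ncard := Set.ncard_le_ncard hsub (Set.toFinite _)
      _ = k := h1
  refine ⟨?_, ?_, ⟨⟨hx, hxR⟩, ⟨hy, hyR⟩⟩, ?_⟩
  · intro a ha b hb hab
    apply hrest a (hRsubK ha) b (hRsubK hb) hab
    intro h
    have : a ∈ ({x, y} : Set V) := h ▸ Or.inl rfl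
    rcases this with h' | h'
    · exact hxR (h' ▸ ha)
    · simp only [Set.mem_singleton_iff] at h'; exact hyR (h' ▸ ha)
  · rw [Set.ncard_diff hRsubK, hKvcard]
    omega
  · intro a ha b hb hab hnab
    have hpair : ({a, b} : Set V) = {x, y} := by
      by_contra h
      exact hnab (hrest a ha.1 b hb.1 hab h)
    have hax : a = x ∨ a = y := by
      have : a ∈ ({x, y} : Set V) := hpair ▸ Or.inl rfl
      simpa using this
    have hbx : b = x ∨ b = y := by
      have : b ∈ ({x, y} : Set V) := hpair ▸ Or.inr rfl
      simpa using this
    rcases hax with rfl | rfl <;> rcases hbx with rfl | rfl <;> tauto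
end

section
/- In any proper edge-colouring of a graph in which every set of four vertices spans at most four coloured edges, any set of five or more vertices contains two disjoint uncoloured edges among its induced complete graph edges (assuming the five vertices induce a complete graph K_5). -/
lemma two_none {V : Type*} [Fintype V] [DecidableEq V] {C : Type*} (G : SimpleGraph V)
    (c : Sym2 V → Option C)
    (h4 : ∀ t : Finset V, t.card = 4 →
      {e : Sym2 V | e ∈ G.edgeSet ∧ (∀ x ∈ e, x ∈ t) ∧ (c e).isSome}.ncard ≤ 4)
    {p q r s : V} (hpq : p ≠ q) (hpr : p ≠ r) (hps : p ≠ s) (hqr : q ≠ r)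
    (hqs : q ≠ s) (hrs : r ≠ s)
    (apq : G.Adj p q) (apr : G.Adj p r) (aps : G.Adj p s) (aqr : G.Adj q r)
    (aqs : G.Adj q s) (ars : G.Adj r s) :
    (c s(p,q) = none ∧ c s(p,r) = none) ∨ ((c s(p,q) = none ∧ c s(p,s) = none) ∨ ((c s(p,q) = none ∧ c s(q,r) = none) ∨ ((c s(p,q) = none ∧ c s(q,s) = none) ∨ ((c s(p,q) = none ∧ c s(r,s) = none) ∨ ((c s(p,r) = none ∧ c s(p,s) = none) ∨ ((c s(p,r) = none ∧ c s(q,r) = none) ∨ ((c s(p,r) = none ∧ c s(q,s) = none) ∨ ((c s(p,r) = none ∧ c s(r,s) = none) ∨ ((c s(p,s) = none ∧ c s(q,r) = none) ∨ ((c s(p,s) = none ∧ c s(q,s) = none) ∨ ((c s(p,s) = none ∧ c s(r,s) = none) ∨ ((c s(q,r) = none ∧ c s(q,s) = none) ∨ ((c s(q,r) = none ∧ c s(r,s) = none) ∨ ((c s(q,s) = none ∧ c s(r,s) = none))))))))))))))) := by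
  classical
  set S6 : Finset (Sym2 V) := {s(p,q), s(p,r), s(p,s), s(q,r), s(q,s), s(r,s)} with hS6
  have hcard6 : S6.card = 6 := by
    rw [hS6,
      Finset.card_insert_of_notMem (by simp [Sym2.eq_iff, hpq, hpr, hps, hqr, hqs, hrs, hpq.symm, hpr.symm, hps.symm, hqr.symm, hqs.symm, hrs.symm]),
      Finset.card_insert_of_notMem (by simp [Sym2.eq_iff, hpq, hpr, hps, hqr, hqs, hrs, hpq.symm, hpr.symm, hps.symm, hqr.symm, hqs.symm, hrs.symm]),
      Finset.card_insert_of_notMem (by simp [Sym2.eq_iff, hpq, hpr, hps, hqr, hqs, hrs, hpq.symm, hpr.symm, hps.symm, hqr.symm, hqs.symm, hrs.symm]),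
      Finset.card_insert_of_notMem (by simp [Sym2.eq_iff, hpq, hpr, hps, hqr, hqs, hrs, hpq.symm, hpr.symm, hps.symm, hqr.symm, hqs.symm, hrs.symm]),
      Finset.card_insert_of_notMem (by simp [Sym2.eq_iff, hpq, hpr, hps, hqr, hqs, hrs, hpq.symm, hpr.symm, hps.symm, hqr.symm, hqs.symm, hrs.symm]),
      Finset.card_singleton]
  set U : Finset (Sym2 V) := S6.filter (fun e => (c e).isNone) with hU
  by_cases hU2 : 2 ≤ U.card
  · obtain ⟨e1, he1, e2, he2, hne⟩ := Finset.one_lt_card.mp (show 1 < U.card by omega)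
    rw [hU, Finset.mem_filter] at he1 he2
    obtain ⟨he1m, he1n⟩ := he1
    obtain ⟨he2m, he2n⟩ := he2
    rw [Option.isNone_iff_eq_none] at he1n he2n
    rw [hS6] at he1m he2m
    simp only [Finset.mem_insert, Finset.mem_singleton] at he1m he2m
    rcases he1m with rfl|rfl|rfl|rfl|rfl|rfl <;> rcases he2m with rfl|rfl|rfl|rfl|rfl|rfl <;>
      first
        | exact absurd rfl hne
        | simp [he1n, he2n]
  · exfalso
    have hc4 : ({p,q,r,s} : Finset V).card = 4 := by
      rw [Finset.card_insert_of_notMem (by simp [hpq, hpr, hps]),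
          Finset.card_insert_of_notMem (by simp [hqr, hqs]),
          Finset.card_insert_of_notMem (by simp [hrs]),
          Finset.card_singleton]
    have hcardSD : 5 ≤ (S6 \ U).card := by
      rw [Finset.card_sdiff_of_subset (Finset.filter_subset _ _), ← hU]
      omega
    have hsubset : ↑(S6 \ U) ⊆
        {e : Sym2 V | e ∈ G.edgeSet ∧ (∀ x ∈ e, x ∈ ({p,q,r,s} : Finset V)) ∧ (c e).isSome} := by
      intro e he
      rw [Finset.mem_coe, Finset.mem_sdiff] at he
      obtain ⟨heS, heU⟩ := he
      have hsome : (c e).isSome := by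
        cases h : (c e) with
        | none => exact absurd (Finset.mem_filter.mpr ⟨heS, by simp [h]⟩) heU
        | some _ => simp
      have hmem : e = s(p,q) ∨ e = s(p,r) ∨ e = s(p,s) ∨ e = s(q,r) ∨ e = s(q,s) ∨
          e = s(r,s) := by simpa [hS6] using heS
      rcases hmem with rfl|rfl|rfl|rfl|rfl|rfl <;>
        refine ⟨(G.mem_edgeSet).mpr (by assumption), ?_, hsome⟩ <;>
        · intro x hx
          rw [Sym2.mem_iff] at hx
          rcases hx with rfl|rfl <;> simp
    have hle := Set.ncard_le_ncard hsubset (Set.toFinite _)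
    rw [Set.ncard_coe_finset] at hle
    have := h4 {p,q,r,s} hc4
    omega


def atl2 (x1 x2 x3 x4 x5 x6 : Bool) : Bool := (x1 && x2) || ((x1 && x3) || ((x1 && x4) || ((x1 && x5) || ((x1 && x6) || ((x2 && x3) || ((x2 && x4) || ((x2 && x5) || ((x2 && x6) || ((x3 && x4) || ((x3 && x5) || ((x3 && x6) || ((x4 && x5) || ((x4 && x6) || ((x5 && x6)))))))))))))))

theorem boolkey : ∀ u1 u2 u3 u4 u5 u6 u7 u8 u9 u10 : Bool,
    atl2 u5 u6 u7 u8 u9 u10 = true → atl2 u2 u3 u4 u8 u9 u10 = true → atl2 u1 u3 u4 u6 u7 u10 = true → atl2 u1 u2 u4 u5 u7 u9 = true → atl2 u1 u2 u3 u5 u6 u8 = true →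
    ((u1 && u8) || ((u1 && u9) || ((u1 && u10) || ((u2 && u6) || ((u2 && u7) || ((u2 && u10) || ((u3 && u5) || ((u3 && u7) || ((u3 && u9) || ((u4 && u5) || ((u4 && u6) || ((u4 && u8) || ((u5 && u10) || ((u6 && u9) || ((u7 && u8)))))))))))))))) = true := by decide


/-- In any partial proper edge-colouring of a graph in which every set of four
vertices spans at most four coloured edges, any set of five vertices inducing a
`K_5` contains two vertex-disjoint uncoloured edges. -/
theorem two_disjoint_uncoloured_edges {V : Type*} [Fintype V] [DecidableEq V]
    {C : Type*} (G : SimpleGraph V) (c : Sym2 V → Option C)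
    (hproper : ∀ e₁ ∈ G.edgeSet, ∀ e₂ ∈ G.edgeSet, e₁ ≠ e₂ →
      (∃ x, x ∈ e₁ ∧ x ∈ e₂) → (c e₁).isSome → (c e₂).isSome → c e₁ ≠ c e₂)
    (h4 : ∀ t : Finset V, t.card = 4 →
      {e : Sym2 V | e ∈ G.edgeSet ∧ (∀ x ∈ e, x ∈ t) ∧ (c e).isSome}.ncard ≤ 4)
    (t : Finset V) (ht : G.IsNClique 5 t) :
    ∃ a ∈ t, ∃ b ∈ t, ∃ x ∈ t, ∃ y ∈ t,
      G.Adj a b ∧ G.Adj x y ∧ a ≠ x ∧ a ≠ y ∧ b ≠ x ∧ b ≠ y ∧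
      c s(a, b) = none ∧ c s(x, y) = none := by
  classical
  have h5 : t.card = 5 := ht.2
  obtain ⟨va, hva⟩ := Finset.card_pos.mp (show 0 < t.card by omega)
  have h4c : (t.erase va).card = 4 := by rw [Finset.card_erase_of_mem hva, h5]
  obtain ⟨vb, hb1⟩ := Finset.card_pos.mp (show 0 < (t.erase va).card by omega)
  have hvb : vb ∈ t := Finset.mem_of_mem_erase hb1
  have nba : vb ≠ va := (Finset.mem_erase.mp hb1).1
  have h3c : ((t.erase va).erase vb).card = 3 := by rw [Finset.card_erase_of_mem hb1, h4c]
  obtain ⟨vc, hc1⟩ := Finset.card_pos.mp (show 0 < ((t.erase va).erase vb).card by omega)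
  have hvc : vc ∈ t := Finset.mem_of_mem_erase (Finset.mem_of_mem_erase hc1)
  have nca : vc ≠ va := (Finset.mem_erase.mp (Finset.mem_of_mem_erase hc1)).1
  have ncb : vc ≠ vb := (Finset.mem_erase.mp hc1).1
  have h2c : (((t.erase va).erase vb).erase vc).card = 2 := by rw [Finset.card_erase_of_mem hc1, h3c]
  obtain ⟨vd, hd1⟩ := Finset.card_pos.mp (show 0 < (((t.erase va).erase vb).erase vc).card by omega)
  have hvd : vd ∈ t := Finset.mem_of_mem_erase (Finset.mem_of_mem_erase (Finset.mem_of_mem_erase hd1))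
  have nda : vd ≠ va := (Finset.mem_erase.mp (Finset.mem_of_mem_erase (Finset.mem_of_mem_erase hd1))).1
  have ndb : vd ≠ vb := (Finset.mem_erase.mp (Finset.mem_of_mem_erase hd1)).1
  have ndc : vd ≠ vc := (Finset.mem_erase.mp hd1).1
  have h1c : ((((t.erase va).erase vb).erase vc).erase vd).card = 1 := by rw [Finset.card_erase_of_mem hd1, h2c]
  obtain ⟨ve, he1⟩ := Finset.card_pos.mp (show 0 < ((((t.erase va).erase vb).erase vc).erase vd).card by omega)
  have hve : ve ∈ t := Finset.mem_of_mem_erase (Finset.mem_of_mem_erase (Finset.mem_of_mem_erase (Finset.mem_of_mem_erase he1)))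
  have nea : ve ≠ va := (Finset.mem_erase.mp (Finset.mem_of_mem_erase (Finset.mem_of_mem_erase (Finset.mem_of_mem_erase he1)))).1
  have neb : ve ≠ vb := (Finset.mem_erase.mp (Finset.mem_of_mem_erase (Finset.mem_of_mem_erase he1))).1
  have nec : ve ≠ vc := (Finset.mem_erase.mp (Finset.mem_of_mem_erase he1)).1
  have ned : ve ≠ vd := (Finset.mem_erase.mp he1).1
  have nab : va ≠ vb := nba.symm
  have nac : va ≠ vc := nca.symm
  have nad : va ≠ vd := nda.symm
  have nae : va ≠ ve := nea.symm
  have nbc : vb ≠ vc := ncb.symm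
  have nbd : vb ≠ vd := ndb.symm
  have nbe : vb ≠ ve := neb.symm
  have ncd : vc ≠ vd := ndc.symm
  have nce : vc ≠ ve := nec.symm
  have nde : vd ≠ ve := ned.symm
  have hAdj : ∀ x ∈ t, ∀ y ∈ t, x ≠ y → G.Adj x y := fun x hx y hy hxy => ht.1 hx hy hxy
  have Aab : G.Adj va vb := hAdj _ hva _ hvb nab
  have Aac : G.Adj va vc := hAdj _ hva _ hvc nac
  have Aad : G.Adj va vd := hAdj _ hva _ hvd nad
  have Aae : G.Adj va ve := hAdj _ hva _ hve nae
  have Abc : G.Adj vb vc := hAdj _ hvb _ hvc nbc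
  have Abd : G.Adj vb vd := hAdj _ hvb _ hvd nbd
  have Abe : G.Adj vb ve := hAdj _ hvb _ hve nbe
  have Acd : G.Adj vc vd := hAdj _ hvc _ hvd ncd
  have Ace : G.Adj vc ve := hAdj _ hvc _ hve nce
  have Ade : G.Adj vd ve := hAdj _ hvd _ hve nde
  have Ha := two_none G c h4 nbc nbd nbe ncd nce nde Abc Abd Abe Acd Ace Ade
  have Hb := two_none G c h4 nac nad nae ncd nce nde Aac Aad Aae Acd Ace Ade
  have Hc := two_none G c h4 nab nad nae nbd nbe nde Aab Aad Aae Abd Abe Ade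
  have Hd := two_none G c h4 nab nac nae nbc nbe nce Aab Aac Aae Abc Abe Ace
  have He := two_none G c h4 nab nac nad nbc nbd ncd Aab Aac Aad Abc Abd Acd
  have Ba : atl2 ((c s(vb,vc)).isNone) ((c s(vb,vd)).isNone) ((c s(vb,ve)).isNone) ((c s(vc,vd)).isNone) ((c s(vc,ve)).isNone) ((c s(vd,ve)).isNone) = true := by
    simp only [atl2, Bool.or_eq_true, Bool.and_eq_true, Option.isNone_iff_eq_none]
    exact Ha
  have Bb : atl2 ((c s(va,vc)).isNone) ((c s(va,vd)).isNone) ((c s(va,ve)).isNone) ((c s(vc,vd)).isNone) ((c s(vc,ve)).isNone) ((c s(vd,ve)).isNone) = true := by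
    simp only [atl2, Bool.or_eq_true, Bool.and_eq_true, Option.isNone_iff_eq_none]
    exact Hb
  have Bc : atl2 ((c s(va,vb)).isNone) ((c s(va,vd)).isNone) ((c s(va,ve)).isNone) ((c s(vb,vd)).isNone) ((c s(vb,ve)).isNone) ((c s(vd,ve)).isNone) = true := by
    simp only [atl2, Bool.or_eq_true, Bool.and_eq_true, Option.isNone_iff_eq_none]
    exact Hc
  have Bd : atl2 ((c s(va,vb)).isNone) ((c s(va,vc)).isNone) ((c s(va,ve)).isNone) ((c s(vb,vc)).isNone) ((c s(vb,ve)).isNone) ((c s(vc,ve)).isNone) = true := by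
    simp only [atl2, Bool.or_eq_true, Bool.and_eq_true, Option.isNone_iff_eq_none]
    exact Hd
  have Be : atl2 ((c s(va,vb)).isNone) ((c s(va,vc)).isNone) ((c s(va,vd)).isNone) ((c s(vb,vc)).isNone) ((c s(vb,vd)).isNone) ((c s(vc,vd)).isNone) = true := by
    simp only [atl2, Bool.or_eq_true, Bool.and_eq_true, Option.isNone_iff_eq_none]
    exact He
  have key := boolkey ((c s(va,vb)).isNone) ((c s(va,vc)).isNone) ((c s(va,vd)).isNone) ((c s(va,ve)).isNone) ((c s(vb,vc)).isNone) ((c s(vb,vd)).isNone) ((c s(vb,ve)).isNone) ((c s(vc,vd)).isNone) ((c s(vc,ve)).isNone) ((c s(vd,ve)).isNone) Ba Bb Bc Bd Be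
  simp only [Bool.or_eq_true, Bool.and_eq_true, Option.isNone_iff_eq_none] at key
  rcases key with ⟨k1, k2⟩|⟨k1, k2⟩|⟨k1, k2⟩|⟨k1, k2⟩|⟨k1, k2⟩|⟨k1, k2⟩|⟨k1, k2⟩|⟨k1, k2⟩|⟨k1, k2⟩|⟨k1, k2⟩|⟨k1, k2⟩|⟨k1, k2⟩|⟨k1, k2⟩|⟨k1, k2⟩|⟨k1, k2⟩
  · exact ⟨va, hva, vb, hvb, vc, hvc, vd, hvd, Aab, Acd, nac, nad, nbc, nbd, k1, k2⟩
  · exact ⟨va, hva, vb, hvb, vc, hvc, ve, hve, Aab, Ace, nac, nae, nbc, nbe, k1, k2⟩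
  · exact ⟨va, hva, vb, hvb, vd, hvd, ve, hve, Aab, Ade, nad, nae, nbd, nbe, k1, k2⟩
  · exact ⟨va, hva, vc, hvc, vb, hvb, vd, hvd, Aac, Abd, nab, nad, ncb, ncd, k1, k2⟩
  · exact ⟨va, hva, vc, hvc, vb, hvb, ve, hve, Aac, Abe, nab, nae, ncb, nce, k1, k2⟩
  · exact ⟨va, hva, vc, hvc, vd, hvd, ve, hve, Aac, Ade, nad, nae, ncd, nce, k1, k2⟩
  · exact ⟨va, hva, vd, hvd, vb, hvb, vc, hvc, Aad, Abc, nab, nac, ndb, ndc, k1, k2⟩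
  · exact ⟨va, hva, vd, hvd, vb, hvb, ve, hve, Aad, Abe, nab, nae, ndb, nde, k1, k2⟩
  · exact ⟨va, hva, vd, hvd, vc, hvc, ve, hve, Aad, Ace, nac, nae, ndc, nde, k1, k2⟩
  · exact ⟨va, hva, ve, hve, vb, hvb, vc, hvc, Aae, Abc, nab, nac, neb, nec, k1, k2⟩
  · exact ⟨va, hva, ve, hve, vb, hvb, vd, hvd, Aae, Abd, nab, nad, neb, ned, k1, k2⟩
  · exact ⟨va, hva, ve, hve, vc, hvc, vd, hvd, Aae, Acd, nac, nad, nec, ned, k1, k2⟩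
  · exact ⟨vb, hvb, vc, hvc, vd, hvd, ve, hve, Abc, Ade, nbd, nbe, ncd, nce, k1, k2⟩
  · exact ⟨vb, hvb, vd, hvd, vc, hvc, ve, hve, Abd, Ace, nbc, nbe, ndc, nde, k1, k2⟩
  · exact ⟨vb, hvb, ve, hve, vc, hvc, vd, hvd, Abe, Acd, nbc, nbd, nec, ned, k1, k2⟩
end

section
/- Let J be the graph obtained from the complete bipartite graph K_{3,4} with parts {a,b,c} and {w,x,y,z} by adding the three edges ab, ac, bc. Then in every proper edge-colouring of J there exists a rainbow copy of K_4, i.e., a 4-clique whose six edges receive six distinct colours. -/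
/-- The graph `J` obtained from `K_{3,4}` with parts `{a,b,c} = {0,1,2}` and
`{w,x,y,z} = {3,4,5,6}` by adding the triangle `abc`: two vertices are adjacent
iff they are distinct and at least one of them lies in `{0,1,2}`. -/
def Jgraph : SimpleGraph (Fin 7) :=
  SimpleGraph.fromRel (fun x _ => x.val < 3)

lemma Jkey (c : Sym2 (Fin 7) → ℕ)
    (hproper : ∀ e₁ ∈ Jgraph.edgeSet, ∀ e₂ ∈ Jgraph.edgeSet, e₁ ≠ e₂ →
      (∃ x, x ∈ e₁ ∧ x ∈ e₂) → c e₁ ≠ c e₂)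
    (v : Fin 7) (hv : 3 ≤ v.val)
    (h0 : c s(v, 0) ≠ c s(1, 2))
    (h1 : c s(v, 1) ≠ c s(0, 2))
    (h2 : c s(v, 2) ≠ c s(0, 1)) :
    ∃ t : Finset (Fin 7), Jgraph.IsNClique 4 t ∧
      ∀ e₁ ∈ Jgraph.edgeSet, ∀ e₂ ∈ Jgraph.edgeSet,
        (∀ x ∈ e₁, x ∈ t) → (∀ x ∈ e₂, x ∈ t) → e₁ ≠ e₂ → c e₁ ≠ c e₂ := by
  have hv0 : v ≠ 0 := by intro h; subst h; simp at hv
  have hv1 : v ≠ 1 := by intro h; subst h; simp at hv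
  have hv2 : v ≠ 2 := by intro h; subst h; simp at hv
  have hswap : ∀ a b : Fin 7, c s(a, b) = c s(b, a) := fun a b => congrArg c Sym2.eq_swap
  have hs10 : c s((1:Fin 7), 0) = c s(0, 1) := hswap 1 0
  have hs20 : c s((2:Fin 7), 0) = c s(0, 2) := hswap 2 0
  have hs21 : c s((2:Fin 7), 1) = c s(1, 2) := hswap 2 1
  have hw0 : c s((0:Fin 7), v) = c s(v, 0) := hswap 0 v
  have hw1 : c s((1:Fin 7), v) = c s(v, 1) := hswap 1 v
  have hw2 : c s((2:Fin 7), v) = c s(v, 2) := hswap 2 v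
  refine ⟨{0, 1, 2, v}, ⟨?_, ?_⟩, ?_⟩
  · intro a ha b hb hab
    simp only [Finset.coe_insert, Set.mem_insert_iff, Finset.coe_singleton,
      Set.mem_singleton_iff] at ha hb
    simp only [Jgraph, SimpleGraph.fromRel_adj]
    rcases ha with rfl | rfl | rfl | rfl <;> rcases hb with rfl | rfl | rfl | rfl <;>
      simp_all
  · rw [Finset.card_insert_of_notMem, Finset.card_insert_of_notMem,
      Finset.card_insert_of_notMem] <;> simp_all [eq_comm]
  · intro e₁ he₁ e₂ he₂ ht₁ ht₂ hne
    induction e₁ using Sym2.ind with | _ p q =>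
    induction e₂ using Sym2.ind with | _ r s =>
    have hp := ht₁ p (by simp)
    have hq := ht₁ q (by simp)
    have hr := ht₂ r (by simp)
    have hs := ht₂ s (by simp)
    simp only [Finset.mem_insert, Finset.mem_singleton] at hp hq hr hs
    rcases hp with rfl | rfl | rfl | rfl <;> rcases hq with rfl | rfl | rfl | rfl <;>
      rcases hr with rfl | rfl | rfl | rfl <;> rcases hs with rfl | rfl | rfl | rfl <;>
      first
      | exact absurd rfl hne
      | exact absurd Sym2.eq_swap hne
      | exact absurd rfl (Jgraph.mem_edgeSet.mp he₁).ne
      | exact absurd rfl (Jgraph.mem_edgeSet.mp he₂).ne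
      | exact hproper _ he₁ _ he₂ hne ⟨_, Sym2.mem_mk_left _ _, Sym2.mem_mk_left _ _⟩
      | exact hproper _ he₁ _ he₂ hne ⟨_, Sym2.mem_mk_left _ _, Sym2.mem_mk_right _ _⟩
      | exact hproper _ he₁ _ he₂ hne ⟨_, Sym2.mem_mk_right _ _, Sym2.mem_mk_left _ _⟩
      | exact hproper _ he₁ _ he₂ hne ⟨_, Sym2.mem_mk_right _ _, Sym2.mem_mk_right _ _⟩
      | ((try simp only [hs10, hs20, hs21, hw0, hw1, hw2])
         first
         | exact h0 | exact h0.symm | exact h1 | exact h1.symm | exact h2 | exact h2.symm)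

/-- In every proper edge-colouring of `J` there is a rainbow `K_4`: a 4-clique
whose six edges receive pairwise distinct colours. -/
theorem Jgraph_rainbow_K4 (c : Sym2 (Fin 7) → ℕ)
    (hproper : ∀ e₁ ∈ Jgraph.edgeSet, ∀ e₂ ∈ Jgraph.edgeSet, e₁ ≠ e₂ →
      (∃ x, x ∈ e₁ ∧ x ∈ e₂) → c e₁ ≠ c e₂) :
    ∃ t : Finset (Fin 7), Jgraph.IsNClique 4 t ∧
      ∀ e₁ ∈ Jgraph.edgeSet, ∀ e₂ ∈ Jgraph.edgeSet,
        (∀ x ∈ e₁, x ∈ t) → (∀ x ∈ e₂, x ∈ t) → e₁ ≠ e₂ → c e₁ ≠ c e₂ := by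
  have hgood : ∃ v : Fin 7, 3 ≤ v.val ∧ c s(v, 0) ≠ c s(1, 2) ∧
      c s(v, 1) ≠ c s(0, 2) ∧ c s(v, 2) ≠ c s(0, 1) := by
    by_contra hbad
    push_neg at hbad
    set S : Finset (Fin 7) := {3, 4, 5, 6} with hS
    have hfail : ∀ v ∈ S, c s(v, 0) = c s(1, 2) ∨ c s(v, 1) = c s(0, 2) ∨
        c s(v, 2) = c s(0, 1) := by
      intro v hv
      have h3 : 3 ≤ v.val := by fin_cases hv <;> decide
      by_contra h
      push_neg at h
      exact h.2.2 (hbad v h3 h.1 h.2.1)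
    set g : Fin 7 → Fin 3 := fun v =>
      if c s(v, 0) = c s(1, 2) then 0 else if c s(v, 1) = c s(0, 2) then 1 else 2 with hg
    obtain ⟨x, hx, y, hy, hxy, hgxy⟩ :=
      Finset.exists_ne_map_eq_of_card_lt_of_maps_to
        (s := S) (t := (Finset.univ : Finset (Fin 3)))
        (by decide) (fun a _ => Finset.mem_univ (g a))
    have hx3 : 3 ≤ x.val := by fin_cases hx <;> decide
    have hy3 : 3 ≤ y.val := by fin_cases hy <;> decide
    have key : ∃ i : Fin 7, i.val < 3 ∧ c s(x, i) = c s(y, i) := by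
      simp only [hg] at hgxy
      split_ifs at hgxy
      all_goals
        first
        | exact absurd hgxy (by decide)
        | exact ⟨0, by decide, ‹c s(x, 0) = c s(1, 2)›.trans ‹c s(y, 0) = c s(1, 2)›.symm⟩
        | exact ⟨1, by decide, ‹c s(x, 1) = c s(0, 2)›.trans ‹c s(y, 1) = c s(0, 2)›.symm⟩
        | (have hx2 := ((hfail x hx).resolve_left ‹¬c s(x, 0) = c s(1, 2)›).resolve_left
             ‹¬c s(x, 1) = c s(0, 2)›
           have hy2 := ((hfail y hy).resolve_left ‹¬c s(y, 0) = c s(1, 2)›).resolve_left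
             ‹¬c s(y, 1) = c s(0, 2)›
           exact ⟨2, by decide, hx2.trans hy2.symm⟩)
    obtain ⟨i, hi3, hci⟩ := key
    have hxi : x ≠ i := Fin.ne_of_val_ne (by omega)
    have hyi : y ≠ i := Fin.ne_of_val_ne (by omega)
    have hex : s(x, i) ∈ Jgraph.edgeSet := by
      rw [SimpleGraph.mem_edgeSet]
      simp [Jgraph, SimpleGraph.fromRel_adj, hxi]
      omega
    have hey : s(y, i) ∈ Jgraph.edgeSet := by
      rw [SimpleGraph.mem_edgeSet]
      simp [Jgraph, SimpleGraph.fromRel_adj, hyi]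
      omega
    have hnexy : s(x, i) ≠ s(y, i) := by
      intro h
      rw [Sym2.eq_iff] at h
      rcases h with ⟨rfl, -⟩ | ⟨rfl, rfl⟩
      · exact hxy rfl
      · exact hxi rfl
    exact hproper _ hex _ hey hnexy ⟨i, Sym2.mem_mk_right _ _, Sym2.mem_mk_right _ _⟩ hci
  obtain ⟨v, hv, h0, h1, h2⟩ := hgood
  exact Jkey c hproper v hv h0 h1 h2
end

section
/- Every finite graph G with maximum density m(G) < 15/7 in which every vertex and edge lies in a 4-clique, and whose 4-cliques form a single K_4-component, has at most 10 vertices. -/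
open Finset

namespace K4Aux

variable {V : Type*} [DecidableEq V]

/-- Union of a family of cliques. -/
def uSet (C : Finset (Finset V)) : Finset V := C.sup id

/-- Directed edges within the cliques of the family. -/
def eSet (C : Finset (Finset V)) : Finset (V × V) := C.sup fun s => s.offDiag

lemma mem_uSet {C : Finset (Finset V)} {x : V} :
    x ∈ uSet C ↔ ∃ s ∈ C, x ∈ s := by
  simp [uSet, Finset.mem_sup]

lemma mem_eSet {C : Finset (Finset V)} {p : V × V} :
    p ∈ eSet C ↔ ∃ s ∈ C, p ∈ s.offDiag := by
  simp [eSet, Finset.mem_sup]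

lemma eSet_coords {C : Finset (Finset V)} {p : V × V} (hp : p ∈ eSet C) :
    p.1 ∈ uSet C ∧ p.2 ∈ uSet C := by
  obtain ⟨s, hs, hps⟩ := mem_eSet.1 hp
  rw [Finset.mem_offDiag] at hps
  exact ⟨mem_uSet.2 ⟨s, hs, hps.1⟩, mem_uSet.2 ⟨s, hs, hps.2.1⟩⟩

/-- One step of the growth: inserting a 4-set sharing at least two vertices with
an existing member preserves the density invariant `5·v ≤ e + 8`. -/
lemma step {C : Finset (Finset V)} {s t : Finset V}
    (hs : s.card = 4) (htC : t ∈ C) (hst : 2 ≤ (s ∩ t).card)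
    (hinv : 5 * (uSet C).card ≤ (eSet C).card + 8) :
    5 * (uSet (insert s C)).card ≤ (eSet (insert s C)).card + 8 := by
  have htU : t ⊆ uSet C := fun x hx => mem_uSet.2 ⟨t, htC, hx⟩
  set k := (s ∩ uSet C).card with hkdef
  have hk2 : 2 ≤ k := le_trans hst (Finset.card_le_card
    (Finset.inter_subset_inter (Finset.Subset.refl s) htU))
  have hk4 : k ≤ 4 := hs ▸ Finset.card_le_card (Finset.inter_subset_left)
  -- vertices
  have hU : uSet (insert s C) = s ∪ uSet C := by
    simp [uSet, Finset.sup_insert]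
  have hVcount : (uSet (insert s C)).card + k = 4 + (uSet C).card := by
    rw [hU, hkdef, Finset.card_union_add_card_inter, hs]
  -- edges
  have hE : eSet (insert s C) = s.offDiag ∪ eSet C := by
    simp [eSet, Finset.sup_insert]
  have hEcount : (eSet (insert s C)).card
      = (s.offDiag \ eSet C).card + (eSet C).card := by
    rw [hE]; rw [Finset.card_sdiff_add_card]
  have hsub : s.offDiag \ (s ∩ uSet C).offDiag ⊆ s.offDiag \ eSet C := by
    intro p hp
    rw [Finset.mem_sdiff] at hp ⊢
    refine ⟨hp.1, fun hpE => hp.2 ?_⟩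
    have h1 := eSet_coords hpE
    rw [Finset.mem_offDiag] at hp ⊢
    exact ⟨Finset.mem_inter.2 ⟨hp.1.1, h1.1⟩,
      Finset.mem_inter.2 ⟨hp.1.2.1, h1.2⟩, hp.1.2.2⟩
  have hnew : s.offDiag.card - (s ∩ uSet C).offDiag.card
      ≤ (s.offDiag \ eSet C).card :=
    le_trans (Finset.le_card_sdiff _ _) (Finset.card_le_card hsub)
  have hoff1 : s.offDiag.card = 12 := by rw [Finset.offDiag_card, hs]
  have hoff2 : (s ∩ uSet C).offDiag.card = k * k - k := by
    rw [Finset.offDiag_card, hkdef]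
  rw [hoff1, hoff2] at hnew
  interval_cases k <;> omega

lemma exists_boundary {α : Type*} {r : α → α → Prop} {C : Set α} :
    ∀ {x y}, Relation.ReflTransGen r x y → x ∈ C → y ∉ C →
      ∃ a b, a ∈ C ∧ b ∉ C ∧ r a b := by
  intro x y h
  induction h with
  | refl => intro hx hy; exact absurd hx hy
  | @tail m y h stp ih =>
    intro hx hy
    by_cases hm : m ∈ C
    · exact ⟨m, y, hm, hy, stp⟩
    · exact ih hx hm

/-- Growing the family until it exhausts `K` preserves the invariant. -/
lemma grow (K : Finset (Finset V)) (hK4 : ∀ s ∈ K, s.card = 4)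
    (hconn : ∀ C : Finset (Finset V), C.Nonempty → C ⊆ K → ¬ K ⊆ C →
      ∃ s ∈ K, s ∉ C ∧ ∃ t ∈ C, 2 ≤ (s ∩ t).card) :
    ∀ n (C : Finset (Finset V)), (K \ C).card = n → C.Nonempty → C ⊆ K →
      5 * (uSet C).card ≤ (eSet C).card + 8 →
      5 * (uSet K).card ≤ (eSet K).card + 8 := by
  intro n
  induction n with
  | zero =>
    intro C h0 _ hsub hinv
    have hKC : K = C := Finset.Subset.antisymm
      (Finset.sdiff_eq_empty_iff_subset.1 (Finset.card_eq_zero.1 h0)) hsub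
    rw [hKC]; exact hinv
  | succ n ih =>
    intro C h0 hne hsub hinv
    have hns : ¬ K ⊆ C := by
      intro h
      rw [Finset.sdiff_eq_empty_iff_subset.2 h] at h0
      simp at h0
    obtain ⟨s, hsK, hsC, t, htC, hst⟩ := hconn C hne hsub hns
    have hcard : (K \ insert s C).card = n := by
      rw [Finset.sdiff_insert,
        Finset.card_erase_of_mem (Finset.mem_sdiff.2 ⟨hsK, hsC⟩), h0]
      omega
    exact ih (insert s C) hcard (Finset.insert_nonempty s C)
      (Finset.insert_subset hsK hsub) (step (hK4 s hsK) htC hst hinv)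

end K4Aux

/-- Every finite graph `G` with maximum density `m(G) < 15/7` in which every
vertex and edge lies in a 4-clique, and whose 4-cliques form a single
`K_4`-component, has at most 10 vertices. -/
theorem K4_component_card_le_ten {V : Type*} [Fintype V] [DecidableEq V]
    (G : SimpleGraph V)
    (hm : ∀ J : G.Subgraph, J.verts.Nonempty →
      (J.edgeSet.ncard : ℝ) / (J.verts.ncard : ℝ) < 15 / 7)
    (hvtx : ∀ x : V, ∃ s : Finset V, G.IsNClique 4 s ∧ x ∈ s)
    (hedge : ∀ x y : V, G.Adj x y → ∃ s : Finset V, G.IsNClique 4 s ∧ x ∈ s ∧ y ∈ s)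
    (hcomp : ∀ s t : Finset V, G.IsNClique 4 s → G.IsNClique 4 t →
      Relation.ReflTransGen
        (fun a b : Finset V => G.IsNClique 4 a ∧ G.IsNClique 4 b ∧ 2 ≤ (a ∩ b).card) s t) :
    Fintype.card V ≤ 10 := by
  classical
  by_contra hcard
  push_neg at hcard
  have hVpos : 0 < Fintype.card V := by omega
  obtain ⟨x0⟩ := Fintype.card_pos_iff.1 hVpos
  obtain ⟨s0, hs0, hx0⟩ := hvtx x0
  set K : Finset (Finset V) := Finset.univ.filter (fun s => G.IsNClique 4 s) with hKdef
  have hmemK : ∀ s : Finset V, s ∈ K ↔ G.IsNClique 4 s := by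
    intro s; simp [hKdef]
  have hK4 : ∀ s ∈ K, s.card = 4 := fun s hs => ((hmemK s).1 hs).2
  have hs0K : s0 ∈ K := (hmemK s0).2 hs0
  -- connectivity of the clique family
  have hconn : ∀ C : Finset (Finset V), C.Nonempty → C ⊆ K → ¬ K ⊆ C →
      ∃ s ∈ K, s ∉ C ∧ ∃ t ∈ C, 2 ≤ (s ∩ t).card := by
    intro C hne hsub hns
    obtain ⟨w, hw⟩ : ∃ w, w ∈ K \ C := by
      by_contra h
      push_neg at h
      exact hns fun x hx => by
        by_contra hxC
        exact h x (Finset.mem_sdiff.2 ⟨hx, hxC⟩)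
    rw [Finset.mem_sdiff] at hw
    obtain ⟨c0, hc0⟩ := hne
    have chain := hcomp c0 w ((hmemK c0).1 (hsub hc0)) ((hmemK w).1 hw.1)
    obtain ⟨a, b, haC, hbC, hr⟩ :=
      K4Aux.exists_boundary (C := (↑C : Set (Finset V))) chain
        (Finset.mem_coe.2 hc0) (fun h => hw.2 (Finset.mem_coe.1 h))
    refine ⟨b, (hmemK b).2 hr.2.1, fun h => hbC (Finset.mem_coe.2 h),
      a, Finset.mem_coe.1 haC, ?_⟩
    rw [Finset.inter_comm]; exact hr.2.2
  -- base invariant for {s0}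
  have hbase : 5 * (K4Aux.uSet {s0}).card ≤ (K4Aux.eSet {s0}).card + 8 := by
    have h1 : K4Aux.uSet {s0} = s0 := by simp [K4Aux.uSet]
    have h2 : K4Aux.eSet {s0} = s0.offDiag := by simp [K4Aux.eSet]
    rw [h1, h2, Finset.offDiag_card, hs0.2]
  -- run the growth
  have hinvK : 5 * (K4Aux.uSet K).card ≤ (K4Aux.eSet K).card + 8 :=
    K4Aux.grow K hK4 hconn (K \ {s0}).card {s0} rfl
      (Finset.singleton_nonempty s0) (Finset.singleton_subset_iff.2 hs0K) hbase
  -- the union of all cliques is everything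
  have hUuniv : K4Aux.uSet K = Finset.univ := by
    apply Finset.eq_univ_of_forall
    intro x
    obtain ⟨s, hs, hxs⟩ := hvtx x
    exact K4Aux.mem_uSet.2 ⟨s, (hmemK s).2 hs, hxs⟩
  have hUcard : (K4Aux.uSet K).card = Fintype.card V := by
    rw [hUuniv, Finset.card_univ]
  -- edges of the cliques are edges of G, counted with multiplicity 2
  have hEsub : K4Aux.eSet K ⊆ Finset.univ.filter (fun p : V × V => G.Adj p.1 p.2) := by
    intro p hp
    obtain ⟨s, hsK, hps⟩ := K4Aux.mem_eSet.1 hp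
    rw [Finset.mem_offDiag] at hps
    refine Finset.mem_filter.2 ⟨Finset.mem_univ _, ?_⟩
    exact ((hmemK s).1 hsK).1 hps.1 hps.2.1 hps.2.2
  have hEle : (K4Aux.eSet K).card ≤ 2 * G.edgeFinset.card := by
    rw [SimpleGraph.two_mul_card_edgeFinset]
    exact Finset.card_le_card hEsub
  -- density bound for the full graph
  have htop := hm ⊤ ⟨x0, trivial⟩
  rw [SimpleGraph.Subgraph.verts_top, SimpleGraph.Subgraph.edgeSet_top,
    Set.ncard_univ, Set.ncard_eq_toFinset_card'] at htop
  have hdens : 7 * G.edgeFinset.card < 15 * Fintype.card V := by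
    have hv : (0 : ℝ) < (Fintype.card V : ℝ) := by exact_mod_cast hVpos
    rw [Nat.card_eq_fintype_card, div_lt_div_iff₀ hv (by norm_num : (0:ℝ) < 7)] at htop
    have he : G.edgeSet.toFinset = G.edgeFinset := rfl
    rw [he] at htop
    have h2 : (7 : ℝ) * (G.edgeFinset.card : ℝ) < 15 * (Fintype.card V : ℝ) := by
      linarith
    exact_mod_cast h2
  omega
end
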